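/- Suppose n > 500 is an extraordinary number whose largest prime factor is p. Then p < log n and gcd(n/p, p) = 1 (i.e. p^2 does not divide n). -/

import Mathlib

/-- Sum of the positive divisors of `n`. -/
def sigma1 (n : ℕ) : ℕ := ∑ d ∈ n.divisors, d

/-- `G n = σ(n) / (n · log log n)`. -/
noncomputable def G (n : ℕ) : ℝ := (sigma1 n : ℝ) / ((n : ℝ) * Real.log (Real.log n))

/-- `n` is a GA1 number: composite and `G n ≥ G (n/p)` for every prime `p ∣ n`. -/
def GA1 (n : ℕ) : Prop :=
  1 < n ∧ ¬ n.Prime ∧ ∀ p : ℕ, p.Prime → p ∣ n → G (n / p) ≤ G n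

/-- `n` is a GA2 number: `n > 1` and `G n ≥ G (c·n)` for all positive integers `c`. -/
def GA2 (n : ℕ) : Prop :=
  1 < n ∧ ∀ c : ℕ, 0 < c → G (c * n) ≤ G n

/-- `n` is extraordinary: both GA1 and GA2. -/
def Extraordinary (n : ℕ) : Prop := GA1 n ∧ GA2 n

lemma sigma1_eq_sigma (n : ℕ) : sigma1 n = ArithmeticFunction.sigma 1 n := by
  rw [ArithmeticFunction.sigma_one_apply]; rfl

lemma sigma1_mul_coprime {a b : ℕ} (h : Nat.Coprime a b) :
    sigma1 (a * b) = sigma1 a * sigma1 b := by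
  simp only [sigma1_eq_sigma]
  exact ArithmeticFunction.isMultiplicative_sigma.map_mul_of_coprime h

lemma sigma1_prime_pow {p : ℕ} (hp : p.Prime) (k : ℕ) :
    sigma1 (p ^ k) = ∑ i ∈ Finset.range (k + 1), p ^ i := by
  unfold sigma1
  exact Nat.sum_divisors_prime_pow hp

lemma sigma1_pos {n : ℕ} (hn : 0 < n) : 0 < sigma1 n := by
  unfold sigma1
  apply Finset.sum_pos
  · intro i hi; exact Nat.pos_of_mem_divisors hi
  · exact ⟨1, Nat.one_mem_divisors.mpr hn.ne'⟩

lemma sigma1_prime {p : ℕ} (hp : p.Prime) : sigma1 p = p + 1 := by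
  have := sigma1_prime_pow hp 1
  simp [Finset.sum_range_succ] at this
  simpa [this] using by omega

lemma sigma1_pp_succ {p : ℕ} (hp : p.Prime) (k : ℕ) :
    sigma1 (p ^ (k + 1)) = p * sigma1 (p ^ k) + 1 := by
  rw [sigma1_prime_pow hp, sigma1_prime_pow hp, Finset.sum_range_succ',
    Finset.mul_sum]
  simp [pow_succ, mul_comm]

lemma exists_decomp {n p : ℕ} (hp : p.Prime) (hn : 0 < n) (hpn : p ∣ n) :
    ∃ a m : ℕ, 1 ≤ a ∧ Nat.Coprime p m ∧ n = p ^ a * m ∧ n / p = p ^ (a - 1) * m ∧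
      (p ^ 2 ∣ n → 2 ≤ a) := by
  have h1 : 1 ≤ n.factorization p := hp.factorization_pos_of_dvd hn.ne' hpn
  refine ⟨n.factorization p, n / p ^ n.factorization p, h1,
    Nat.coprime_ordCompl hp hn.ne', ?_, ?_, ?_⟩
  · exact (Nat.ordProj_mul_ordCompl_eq_self n p).symm
  · obtain ⟨a, ha⟩ : ∃ a, n.factorization p = a + 1 := ⟨n.factorization p - 1, by omega⟩
    conv_lhs => rw [(Nat.ordProj_mul_ordCompl_eq_self n p).symm]
    rw [ha, pow_succ, Nat.add_sub_cancel, mul_comm (p^a) p, mul_assoc,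
      Nat.mul_div_cancel_left _ hp.pos]
  · intro h2
    exact (Nat.Prime.pow_dvd_iff_le_factorization hp hn.ne').mp h2

lemma sigma1_le {n p : ℕ} (hp : p.Prime) (hn : 0 < n) (hpn : p ∣ n) :
    sigma1 n ≤ (p + 1) * sigma1 (n / p) := by
  obtain ⟨a, m, ha, hcop, hnm, hdm, -⟩ := exists_decomp hp hn hpn
  obtain ⟨b, hb⟩ : ∃ b, a = b + 1 := ⟨a - 1, by omega⟩
  subst hb
  rw [hdm, hnm, sigma1_mul_coprime (Nat.Coprime.pow_left _ hcop),
    sigma1_mul_coprime (Nat.Coprime.pow_left _ hcop), Nat.add_sub_cancel,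
    sigma1_pp_succ hp]
  nlinarith [sigma1_pos (pow_pos hp.pos b), Nat.zero_le (sigma1 m)]

lemma sigma1_le_sq {n p : ℕ} (hp : p.Prime) (hn : 0 < n) (hp2 : p ^ 2 ∣ n) :
    (p + 1) * sigma1 n ≤ (p ^ 2 + p + 1) * sigma1 (n / p) := by
  have hpn : p ∣ n := dvd_trans (dvd_pow_self p two_ne_zero) hp2
  obtain ⟨a, m, ha, hcop, hnm, hdm, h2⟩ := exists_decomp hp hn hpn
  have ha2 := h2 hp2
  obtain ⟨b, hb⟩ : ∃ b, a = b + 2 := ⟨a - 2, by omega⟩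
  subst hb
  have hb1 : b + 2 - 1 = b + 1 := by omega
  rw [hdm, hnm, hb1, sigma1_mul_coprime (Nat.Coprime.pow_left _ hcop),
    sigma1_mul_coprime (Nat.Coprime.pow_left _ hcop),
    show b + 2 = (b + 1) + 1 from rfl, sigma1_pp_succ hp (b+1), sigma1_pp_succ hp b]
  rw [← mul_assoc, ← mul_assoc]
  apply Nat.mul_le_mul_right
  have hpt : p ≤ p * sigma1 (p ^ b) :=
    Nat.le_mul_of_pos_right p (sigma1_pos (pow_pos hp.pos b))
  nlinarith [hpt]

set_option maxHeartbeats 1000000 in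
/-- If `n > 500` is extraordinary with largest prime factor `p`, then
`p < log n` and `gcd(n/p, p) = 1`. -/
theorem extraordinary_largest_prime_factor (n p : ℕ) (hn : 500 < n)
    (hext : Extraordinary n) (hp : p.Prime) (hpn : p ∣ n)
    (hmax : ∀ q : ℕ, q.Prime → q ∣ n → q ≤ p) :
    (p : ℝ) < Real.log n ∧ Nat.gcd (n / p) p = 1 := by
  have hn0 : 0 < n := by omega
  have hnR : (501 : ℝ) ≤ (n : ℝ) := by exact_mod_cast hn
  have hnRpos : (0 : ℝ) < (n : ℝ) := by positivity
  set L := Real.log n with hLdef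
  have he1 : Real.exp 1 < 2.7182818286 := Real.exp_one_lt_d9
  have hL6 : (6 : ℝ) < L := by
    rw [hLdef, ← Real.exp_lt_exp, Real.exp_log hnRpos]
    calc Real.exp 6 = (Real.exp 1) ^ (6 : ℕ) := by
          rw [← Real.exp_nat_mul]; norm_num
      _ < 2.7182818286 ^ (6:ℕ) := by
          apply pow_lt_pow_left₀ he1 (le_of_lt (Real.exp_pos 1))
          norm_num
      _ < 501 := by norm_num
      _ ≤ (n : ℝ) := hnR
  have hLpos : (0 : ℝ) < L := by linarith
  set l := Real.log L with hldef
  have hl53 : (5 / 3 : ℝ) < l := by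
    rw [hldef, ← Real.exp_lt_exp, Real.exp_log hLpos]
    have h3 : Real.exp (5/3 : ℝ) ^ (3 : ℕ) = Real.exp 5 := by
      rw [← Real.exp_nat_mul]; norm_num
    have h5 : Real.exp 5 < 216 := by
      calc Real.exp 5 = (Real.exp 1) ^ (5 : ℕ) := by rw [← Real.exp_nat_mul]; norm_num
        _ < 2.7182818286 ^ (5:ℕ) := by
            apply pow_lt_pow_left₀ he1 (le_of_lt (Real.exp_pos 1)); norm_num
        _ < 216 := by norm_num
    nlinarith [Real.exp_pos (5/3 : ℝ), h3, h5, hL6,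
      sq_nonneg (Real.exp (5/3:ℝ) - 6), sq_nonneg (Real.exp (5/3:ℝ) + 6)]
  have hlpos : (0 : ℝ) < l := by linarith
  have hLl : (10 : ℝ) < L * l := by nlinarith
  have hSpos : (0 : ℝ) < (sigma1 n : ℝ) := by exact_mod_cast sigma1_pos hn0
  -- consequence of GA2 : for prime q not dividing n, L*l ≤ q log q
  have hqlem : ∀ q : ℕ, q.Prime → ¬ q ∣ n → L * l ≤ (q : ℝ) * Real.log q := by
    intro q hq hqd
    have hq0 : (0 : ℝ) < (q : ℝ) := by exact_mod_cast hq.pos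
    have hGA2 := hext.2.2 q hq.pos
    have hσ : sigma1 (q * n) = (q + 1) * sigma1 n := by
      rw [sigma1_mul_coprime ((Nat.Prime.coprime_iff_not_dvd hq).mpr hqd),
        sigma1_prime hq]
    have hlogqn : Real.log ((q * n : ℕ) : ℝ) = Real.log q + L := by
      push_cast
      rw [Real.log_mul (ne_of_gt hq0) (ne_of_gt hnRpos)]
    have hlogq_nonneg : 0 ≤ Real.log q := Real.log_nonneg (by exact_mod_cast hq.one_lt.le)
    set B := Real.log (Real.log ((q : ℝ) * (n : ℝ))) with hBdef
    have hBval : B = Real.log (Real.log q + L) := by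
      rw [hBdef, Real.log_mul (ne_of_gt hq0) (ne_of_gt hnRpos)]
    have hBpos : 0 < B := by
      rw [hBval]; apply Real.log_pos; linarith
    -- unfold the G inequality
    have h2' : ((q : ℝ) + 1) * (sigma1 n : ℝ) / ((q : ℝ) * (n : ℝ) * B) ≤
        (sigma1 n : ℝ) / ((n : ℝ) * l) := by
      have := hGA2
      unfold G at this
      rw [hσ] at this
      push_cast at this
      exact this
    have hcross := (div_le_div_iff₀ (mul_pos (mul_pos hq0 hnRpos) hBpos)
      (mul_pos hnRpos hlpos)).mp h2'
    have key : ((q : ℝ) + 1) * l ≤ (q : ℝ) * B := by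
      have h3 : (((q:ℝ)+1) * l) * ((sigma1 n : ℝ) * (n:ℝ)) ≤
          ((q:ℝ) * B) * ((sigma1 n : ℝ) * (n:ℝ)) := by
        push_cast at hcross
        nlinarith [hcross]
      exact le_of_mul_le_mul_right h3 (by positivity)
    have h4 : l + l / q ≤ B := by
      rw [← sub_nonneg]
      have : B - (l + l / q) = ((q:ℝ) * B - ((q:ℝ)+1) * l) / q := by field_simp
      rw [this]
      apply div_nonneg _ (le_of_lt hq0)
      linarith
    have h5 : Real.exp (l + l / q) ≤ Real.exp B := Real.exp_le_exp.mpr h4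
    rw [hBval, Real.exp_log (by linarith), Real.exp_add, hldef,
      Real.exp_log hLpos] at h5
    have h6 : 1 + l / q ≤ Real.exp (l / q) := by
      have := Real.add_one_le_exp (l / q); linarith
    have h7 : L * (1 + l / q) ≤ Real.log q + L := by nlinarith
    have h8 : L * (l / q) ≤ Real.log q := by nlinarith [h7]
    calc L * l = (L * (l / q)) * q := by field_simp
      _ ≤ Real.log q * q := by apply mul_le_mul_of_nonneg_right h8 (le_of_lt hq0)
      _ = q * Real.log q := mul_comm _ _
  have hlog2pos : (0:ℝ) < Real.log 2 := Real.log_pos (by norm_num)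
  have hlog5lt : Real.log 5 < 2 := by
    rw [Real.log_lt_iff_lt_exp (by norm_num)]
    calc (5:ℝ) < 2.7182818283 ^ (2:ℕ) := by norm_num
      _ ≤ (Real.exp 1) ^ (2:ℕ) := by
          have := Real.exp_one_gt_d9
          nlinarith [Real.exp_pos 1]
      _ = Real.exp 2 := by rw [← Real.exp_nat_mul]; norm_num
  have hlog2lt : Real.log 2 < 2 := by
    have := Real.log_le_log (by norm_num) (show (2:ℝ) ≤ 5 by norm_num); linarith
  have hlog3lt : Real.log 3 < 2 := by
    have := Real.log_le_log (by norm_num) (show (3:ℝ) ≤ 5 by norm_num); linarith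
  -- small primes divide n
  have h2n : 2 ∣ n := by
    by_contra h
    have := hqlem 2 Nat.prime_two h
    push_cast at this; nlinarith
  have h3n : 3 ∣ n := by
    by_contra h
    have := hqlem 3 Nat.prime_three h
    push_cast at this; nlinarith
  have hp5 : 5 ≤ p := by
    by_contra h
    have h5 : ¬ (5 ∣ n) := fun hd => by have := hmax 5 (by norm_num) hd; omega
    have := hqlem 5 (by norm_num) h5
    push_cast at this; nlinarith
  -- set up M = n / p
  set M := n / p with hMdef
  have hnpM : n = p * M := (Nat.mul_div_cancel' hpn).symm
  have h2M : 2 ∣ M := by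
    have h2p : ¬ (2 ∣ p) := by
      intro h
      have := (Nat.prime_dvd_prime_iff_eq Nat.prime_two hp).mp h; omega
    rcases (Nat.Prime.dvd_mul Nat.prime_two).mp (hnpM ▸ h2n) with h | h
    · exact absurd h h2p
    · exact h
  have h3M : 3 ∣ M := by
    have h3p : ¬ (3 ∣ p) := by
      intro h
      have := (Nat.prime_dvd_prime_iff_eq Nat.prime_three hp).mp h; omega
    rcases (Nat.Prime.dvd_mul Nat.prime_three).mp (hnpM ▸ h3n) with h | h
    · exact absurd h h3p
    · exact h
  have h6M : 6 ≤ M := Nat.le_of_dvd (by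
      rcases Nat.eq_zero_or_pos M with h | h
      · exfalso; rw [h, mul_zero] at hnpM; omega
      · exact h)
    ((by decide : Nat.Coprime 2 3).mul_dvd_of_dvd_of_dvd h2M h3M)
  have hMpos : 0 < M := by omega
  have hMR : (6 : ℝ) ≤ (M : ℝ) := by exact_mod_cast h6M
  have hMRpos : (0:ℝ) < (M:ℝ) := by linarith
  have hS'pos : (0 : ℝ) < (sigma1 M : ℝ) := by exact_mod_cast sigma1_pos hMpos
  have hppos : (0:ℝ) < (p:ℝ) := by positivity
  have hlogM : Real.log M = L - Real.log p := by
    rw [hLdef, hnpM]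
    push_cast
    rw [Real.log_mul (by positivity) (by positivity)]
    ring
  have hlogMpos : (1:ℝ) < Real.log M := by
    rw [← Real.exp_lt_exp, Real.exp_log hMRpos]
    calc Real.exp 1 < 2.7182818286 := he1
      _ < 6 := by norm_num
      _ ≤ (M:ℝ) := hMR
  set l' := Real.log (Real.log M) with hl'def
  have hl'pos : 0 < l' := Real.log_pos hlogMpos
  have hl'l : l' ≤ l := by
    rw [hl'def, hldef]
    apply Real.log_le_log (by linarith)
    rw [hLdef]
    apply Real.log_le_log hMRpos
    exact_mod_cast Nat.le_of_dvd hn0 ⟨p, by rw [hnpM]; ring⟩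
  have hlogp_pos : (0:ℝ) < Real.log p :=
    Real.log_pos (by exact_mod_cast lt_of_lt_of_le (by norm_num : (1:ℕ) < 5) hp5)
  have hpltn : p < n := by
    rcases lt_or_eq_of_le (Nat.le_of_dvd hn0 hpn) with h | h
    · exact h
    · exact absurd (h ▸ hp) hext.1.2.1
  have hlogp_lt : Real.log p < L := by
    rw [hLdef]
    apply Real.log_lt_log hppos
    exact_mod_cast hpltn
  -- key strict inequality : log p / L < l - l'
  have hkey : Real.log p / L < l - l' := by
    have hx0 : (0:ℝ) < (L - Real.log p) / L := div_pos (by linarith) hLpos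
    have hx1 : (L - Real.log p) / L ≠ 1 := by
      intro h
      rw [div_eq_one_iff_eq (ne_of_gt hLpos)] at h
      linarith
    have := Real.log_lt_sub_one_of_pos hx0 hx1
    rw [Real.log_div (by linarith) (ne_of_gt hLpos)] at this
    have hLL : (L - Real.log p) / L - 1 = - (Real.log p / L) := by field_simp; ring
    rw [hLL] at this
    rw [hl'def, hlogM, hldef]
    linarith
  -- GA1 inequality at p
  have hGA1 := hext.1.2.2 p hp hpn
  have hmain : (p:ℝ) * l * (sigma1 M : ℝ) ≤ l' * (sigma1 n : ℝ) := by
    unfold G at hGA1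
    rw [← hMdef] at hGA1
    have hcross := (div_le_div_iff₀ (by positivity) (by positivity)).mp hGA1
    -- hcross : sigma1 M * (n * l) ≤ sigma1 n * (M * l')
    have hnR' : (n:ℝ) = (p:ℝ) * (M:ℝ) := by rw [hnpM]; push_cast; ring
    have h3 : ((p:ℝ) * l * (sigma1 M:ℝ)) * (M:ℝ) ≤ (l' * (sigma1 n:ℝ)) * (M:ℝ) := by
      rw [show ((p:ℝ) * l * (sigma1 M:ℝ)) * (M:ℝ)
          = (sigma1 M:ℝ) * ((n:ℝ) * l) from by rw [hnR']; ring,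
        show (l' * (sigma1 n:ℝ)) * (M:ℝ) = (sigma1 n:ℝ) * ((M:ℝ) * l') from by ring]
      exact hcross
    exact le_of_mul_le_mul_right h3 hMRpos
  -- Part 1 : p < L
  have hple : (p:ℝ) * Real.log p < L * l := by
    have hS := sigma1_le hp hn0 hpn
    have hSR : (sigma1 n : ℝ) ≤ ((p:ℝ) + 1) * (sigma1 M : ℝ) := by
      rw [← hMdef] at hS; exact_mod_cast hS
    have h1 : (p:ℝ) * l ≤ ((p:ℝ) + 1) * l' := by
      have h3 : ((p:ℝ) * l) * (sigma1 M:ℝ) ≤ (((p:ℝ)+1) * l') * (sigma1 M:ℝ) := by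
        nlinarith [hmain, hSR, hl'pos]
      exact le_of_mul_le_mul_right h3 hS'pos
    have h2 : l - l' ≤ l / p := by
      rw [le_div_iff₀ hppos]
      nlinarith [h1, hl'l]
    have h4 : Real.log p / L < l / p := lt_of_lt_of_le hkey h2
    rw [div_lt_div_iff₀ hLpos hppos] at h4
    linarith
  have hpL : (p:ℝ) < L := by
    by_contra hc
    push_neg at hc
    have h1 : l ≤ Real.log p := by
      rw [hldef]; exact Real.log_le_log hLpos hc
    nlinarith [hple, hc, h1, hlpos]
  refine ⟨hpL, ?_⟩
  -- Part 2 : p does not divide M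
  have hnotdvd : ¬ (p ∣ M) := by
    intro hpM
    have hp2 : p ^ 2 ∣ n := by
      rw [hnpM, pow_two]; exact mul_dvd_mul_left p hpM
    have hS := sigma1_le_sq hp hn0 hp2
    have hSR : ((p:ℝ) + 1) * (sigma1 n : ℝ) ≤
        ((p:ℝ)^2 + (p:ℝ) + 1) * (sigma1 M : ℝ) := by
      rw [← hMdef] at hS; exact_mod_cast hS
    have h1 : ((p:ℝ)^2 + (p:ℝ)) * l ≤ ((p:ℝ)^2 + (p:ℝ) + 1) * l' := by
      have h3 : (((p:ℝ)^2 + (p:ℝ)) * l) * (sigma1 M:ℝ) ≤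
          (((p:ℝ)^2 + (p:ℝ) + 1) * l') * (sigma1 M:ℝ) := by
        nlinarith [hmain, hSR, hl'pos, hppos]
      exact le_of_mul_le_mul_right h3 hS'pos
    have h2 : l - l' ≤ l / ((p:ℝ)^2 + (p:ℝ)) := by
      rw [le_div_iff₀ (by positivity)]
      nlinarith [h1, hl'l]
    have h4 : Real.log p / L < l / ((p:ℝ)^2 + (p:ℝ)) := lt_of_lt_of_le hkey h2
    rw [div_lt_div_iff₀ hLpos (by positivity)] at h4
    -- h4 : log p * (p^2+p) < l * L
    obtain ⟨q, hq, hpq, hq2p⟩ := Nat.exists_prime_lt_and_le_two_mul p (by omega)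
    have hqnd : ¬ q ∣ n := fun h => by have := hmax q hq h; omega
    have hql := hqlem q hq hqnd
    have hq2pR : (q:ℝ) ≤ 2 * p := by exact_mod_cast hq2p
    have hqpos : (0:ℝ) < (q:ℝ) := by exact_mod_cast hq.pos
    have hlogq : Real.log q ≤ Real.log (2 * p) :=
      Real.log_le_log hqpos hq2pR
    have hlog2p : Real.log (2 * (p:ℝ)) = Real.log 2 + Real.log p :=
      Real.log_mul (by norm_num) (ne_of_gt hppos)
    have h5 : L * l ≤ 2 * (p:ℝ) * (Real.log 2 + Real.log p) := by
      calc L * l ≤ (q:ℝ) * Real.log q := hql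
        _ ≤ 2 * (p:ℝ) * (Real.log 2 + Real.log p) := by
            rw [← hlog2p]
            apply mul_le_mul hq2pR hlogq (Real.log_nonneg _) (by positivity)
            exact_mod_cast hq.one_lt.le
    -- combine : (p^2+p) log p < L*l ≤ 2p(log2 + logp)
    have h6 : ((p:ℝ)^2 + (p:ℝ)) * Real.log p < 2 * (p:ℝ) * (Real.log 2 + Real.log p) := by
      calc ((p:ℝ)^2 + (p:ℝ)) * Real.log p = Real.log p * ((p:ℝ)^2 + (p:ℝ)) := by ring
        _ < l * L := h4
        _ = L * l := by ring
        _ ≤ 2 * (p:ℝ) * (Real.log 2 + Real.log p) := h5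
    have hp5R : (5:ℝ) ≤ (p:ℝ) := by exact_mod_cast hp5
    have hlogp5 : Real.log 2 ≤ Real.log p :=
      Real.log_le_log (by norm_num) (by linarith)
    have hfac : (p:ℝ) * (((p:ℝ)+1) * Real.log p) < (p:ℝ) * (2*(Real.log 2 + Real.log p)) := by
      calc (p:ℝ) * (((p:ℝ)+1) * Real.log p) = ((p:ℝ)^2 + (p:ℝ)) * Real.log p := by ring
        _ < 2*(p:ℝ)*(Real.log 2 + Real.log p) := h6
        _ = (p:ℝ) * (2*(Real.log 2 + Real.log p)) := by ring
    have e1 : ((p:ℝ)+1) * Real.log p < 2*(Real.log 2 + Real.log p) :=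
      lt_of_mul_lt_mul_left hfac (by positivity)
    have e2 : 6 * Real.log p ≤ ((p:ℝ)+1) * Real.log p :=
      mul_le_mul_of_nonneg_right (by linarith) (le_of_lt hlogp_pos)
    linarith [e1, e2, hlogp5, hlog2pos]
  have : Nat.Coprime p M := (Nat.Prime.coprime_iff_not_dvd hp).mpr hnotdvd
  exact Nat.coprime_comm.mp this
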